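/- Let q be a prime number, let G be a finite group with Fintype.card G = q, and let k be a natural number. Then the pushforward of the uniform distribution on (Fin k → G) × (ZMod q)ˣ under the map (u, a) ↦ (fun i => (u i) ^ ((a : ZMod q)).val) equals the uniform distribution on Fin k → G; that is, raising k independent uniform group elements to a single independent uniform unit exponent yields k independent uniform group elements. -/
import Mathlib

/-- Rerandomization: raising `k` independent uniform elements of a group of prime order `q`
to one common independent uniform unit exponent yields `k` independent uniform elements. -/
theorem map_uniform_common_unit_pow_eq_uniform (q : ℕ) (hq : q.Prime) [NeZero q]
    (G : Type*) [Group G] [Fintype G] (hcard : Fintype.card G = q) (k : ℕ) :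
    PMF.map
        (fun p : (Fin k → G) × (ZMod q)ˣ => fun i : Fin k => (p.1 i) ^ ((p.2 : ZMod q)).val)
        (PMF.uniformOfFintype ((Fin k → G) × (ZMod q)ˣ)) =
      PMF.uniformOfFintype (Fin k → G) := by
  classical
  have hfact : Fact q.Prime := ⟨hq⟩
  ext x
  rw [PMF.map_apply, tsum_fintype]
  simp only [PMF.uniformOfFintype_apply]
  set c : ENNReal := (Fintype.card ((Fin k → G) × (ZMod q)ˣ) : ENNReal)⁻¹ with hc
  rw [Fintype.sum_prod_type_right]
  have key : ∀ a : (ZMod q)ˣ,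
      (∑ u : Fin k → G,
        if x = (fun i : Fin k => (u i) ^ ((a : ZMod q)).val) then c else 0) = c := by
    intro a
    have hcop : (Nat.card G).Coprime ((a : ZMod q)).val := by
      rw [Nat.card_eq_fintype_card, hcard]
      exact (ZMod.val_coe_unit_coprime a).symm
    have hsum : ∀ u : Fin k → G,
        (x = (fun i : Fin k => (u i) ^ ((a : ZMod q)).val)) ↔
          ((fun i : Fin k => (powCoprime hcop).symm (x i)) = u) := by
      intro u
      constructor
      · intro h
        funext i
        have := congrFun h i
        simp only [this]
        exact (powCoprime hcop).symm_apply_apply (u i)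
      · intro h
        funext i
        have := congrFun h i
        rw [← this]
        exact ((powCoprime hcop).apply_symm_apply (x i)).symm
    calc (∑ u : Fin k → G,
          if x = (fun i : Fin k => (u i) ^ ((a : ZMod q)).val) then c else 0)
        = ∑ u : Fin k → G,
          if (fun i : Fin k => (powCoprime hcop).symm (x i)) = u then c else 0 := by
          refine Finset.sum_congr rfl fun u _ => ?_
          exact if_congr (hsum u) rfl rfl
      _ = c := by rw [Finset.sum_ite_eq Finset.univ _ (fun _ => c)]; simp
  rw [Finset.sum_congr rfl fun a _ => key a]
  rw [Finset.sum_const, Finset.card_univ, hc, Fintype.card_prod]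
  have hA : (Fintype.card (Fin k → G) : ENNReal) ≠ 0 := by
    exact_mod_cast Fintype.card_ne_zero
  have hB : (Fintype.card (ZMod q)ˣ : ENNReal) ≠ 0 := by
    exact_mod_cast Fintype.card_ne_zero
  have hA' : (Fintype.card (Fin k → G) : ENNReal) ≠ ⊤ := ENNReal.natCast_ne_top _
  have hB' : (Fintype.card (ZMod q)ˣ : ENNReal) ≠ ⊤ := ENNReal.natCast_ne_top _
  rw [Nat.cast_mul, ENNReal.mul_inv (Or.inl hA) (Or.inl hA'), nsmul_eq_mul]
  rw [mul_comm ((Fintype.card (Fin k → G) : ENNReal))⁻¹, ← mul_assoc,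
    ENNReal.mul_inv_cancel hB hB', one_mul]
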